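/- arXiv:math/0610130 — 2 statements merged into one kernel-verified Lean document; each statement's English description precedes it below -/
import Mathlib

section
/- Let n ≥ 3 be an integer and let (M, μ) be a measure space with finite total measure V = μ(M), V > 0. Let u, s, w : M → ℝ be measurable functions such that u² , s·u², w, and |u|^(2n/(n-2)) are integrable with respect to μ, with w ≥ 0 almost everywhere and ∫_M u² dμ > 0. Let Y and λ be real numbers with Y ≤ 0, and suppose that (i) ∫_M ( s·u² + 4·((n-1)/(n-2))·w ) dμ = Y · (∫_M |u|^(2n/(n-2)) dμ)^((n-2)/n), and (ii) λ · ∫_M u² dμ ≤ ∫_M ( s·u² + 4·w ) dμ. Then λ · V^(2/n) ≤ Y. -/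
open MeasureTheory

/-- Analytic core of Proposition 2 of the paper, abstracted to a measure space:
if `Y ≤ 0`, `∫ (s·u² + 4·((n-1)/(n-2))·w) dμ = Y · (∫ |u|^(2n/(n-2)) dμ)^((n-2)/n)`
and `λ · ∫ u² dμ ≤ ∫ (s·u² + 4·w) dμ`, then `λ · V^(2/n) ≤ Y`. -/
theorem stmt_3 {M : Type*} [MeasurableSpace M] (μ : Measure M) [IsFiniteMeasure μ]
    (n : ℕ) (hn : 3 ≤ n) (hV : 0 < (μ Set.univ).toReal)
    (u s w : M → ℝ) (hu : Measurable u) (hs : Measurable s) (hw : Measurable w)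
    (hu2 : Integrable (fun x => (u x) ^ 2) μ)
    (hsu2 : Integrable (fun x => s x * (u x) ^ 2) μ)
    (hwint : Integrable w μ)
    (hint : Integrable (fun x => |u x| ^ ((2 * (n : ℝ)) / ((n : ℝ) - 2))) μ)
    (hw0 : ∀ᵐ x ∂μ, 0 ≤ w x)
    (hu2pos : 0 < ∫ x, (u x) ^ 2 ∂μ)
    (Y lam : ℝ) (hY : Y ≤ 0)
    (hi : ∫ x, (s x * (u x) ^ 2 + 4 * (((n : ℝ) - 1) / ((n : ℝ) - 2)) * w x) ∂μ =
      Y * (∫ x, |u x| ^ ((2 * (n : ℝ)) / ((n : ℝ) - 2)) ∂μ) ^ (((n : ℝ) - 2) / n))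
    (hii : lam * ∫ x, (u x) ^ 2 ∂μ ≤ ∫ x, (s x * (u x) ^ 2 + 4 * w x) ∂μ) :
    lam * (μ Set.univ).toReal ^ ((2 : ℝ) / n) ≤ Y := by
  have hn3 : (3 : ℝ) ≤ (n : ℝ) := by exact_mod_cast hn
  have hn2 : (1 : ℝ) ≤ (n : ℝ) - 2 := by linarith
  have hn2pos : (0 : ℝ) < (n : ℝ) - 2 := by linarith
  have hnpos : (0 : ℝ) < (n : ℝ) := by linarith
  set I2 := ∫ x, (u x) ^ 2 ∂μ with hI2
  set Ip := ∫ x, |u x| ^ ((2 * (n : ℝ)) / ((n : ℝ) - 2)) ∂μ with hIp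
  set e := ((n : ℝ) - 2) / n with he
  set V := (μ Set.univ).toReal with hVdef
  -- Step 1 : lam * I2 ≤ Y * Ip ^ e
  have hc1 : (1 : ℝ) ≤ ((n : ℝ) - 1) / ((n : ℝ) - 2) := by
    rw [le_div_iff₀ hn2pos]; linarith
  have hmono : ∫ x, (s x * (u x) ^ 2 + 4 * w x) ∂μ ≤
      ∫ x, (s x * (u x) ^ 2 + 4 * (((n : ℝ) - 1) / ((n : ℝ) - 2)) * w x) ∂μ := by
    refine integral_mono_ae (hsu2.add (hwint.const_mul 4))
      (hsu2.add (hwint.const_mul (4 * (((n : ℝ) - 1) / ((n : ℝ) - 2))))) ?_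
    filter_upwards [hw0] with x hx
    have : 4 * w x ≤ 4 * (((n : ℝ) - 1) / ((n : ℝ) - 2)) * w x := by
      apply mul_le_mul_of_nonneg_right _ hx
      nlinarith
    linarith
  have hstep1 : lam * I2 ≤ Y * Ip ^ e := by
    calc lam * I2 ≤ ∫ x, (s x * (u x) ^ 2 + 4 * w x) ∂μ := hii
      _ ≤ _ := hmono
      _ = Y * Ip ^ e := hi
  -- nonnegativity of Ip and Ip ^ e
  have hIpnonneg : 0 ≤ Ip :=
    integral_nonneg fun x => Real.rpow_nonneg (abs_nonneg _) _
  have hIpe_nonneg : 0 ≤ Ip ^ e := Real.rpow_nonneg hIpnonneg _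
  -- lam ≤ 0
  have hlam : lam ≤ 0 := by
    have h1 : lam * I2 ≤ 0 := hstep1.trans (mul_nonpos_of_nonpos_of_nonneg hY hIpe_nonneg)
    nlinarith
  -- Step 2 : Hölder : I2 ≤ Ip ^ e * V ^ (2/n)
  have hr : (2 * (n : ℝ)) / ((n : ℝ) - 2) = ((n : ℝ) / ((n : ℝ) - 2)) * 2 := by
    field_simp
  have hP0 : ENNReal.ofReal ((2 * (n : ℝ)) / ((n : ℝ) - 2)) ≠ 0 := by
    simp only [Ne, ENNReal.ofReal_eq_zero, not_le]
    positivity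
  have hmemu : MemLp u (ENNReal.ofReal ((2 * (n : ℝ)) / ((n : ℝ) - 2))) μ := by
    have h1 : MemLp (fun x => ‖u x‖ ^ (ENNReal.ofReal ((2 * (n : ℝ)) / ((n : ℝ) - 2))).toReal)
        ((ENNReal.ofReal ((2 * (n : ℝ)) / ((n : ℝ) - 2))) /
          (ENNReal.ofReal ((2 * (n : ℝ)) / ((n : ℝ) - 2)))) μ := by
      rw [ENNReal.div_self hP0 ENNReal.ofReal_ne_top, memLp_one_iff_integrable]
      have heq : ∀ x, ‖u x‖ ^ (ENNReal.ofReal ((2 * (n : ℝ)) / ((n : ℝ) - 2))).toReal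
          = |u x| ^ ((2 * (n : ℝ)) / ((n : ℝ) - 2)) := fun x => by
        rw [ENNReal.toReal_ofReal (by positivity), Real.norm_eq_abs]
      exact (integrable_congr (Filter.Eventually.of_forall fun x => (heq x).symm)).mp hint
    exact (memLp_norm_rpow_iff hu.aestronglyMeasurable hP0 ENNReal.ofReal_ne_top).mp h1
  have hdiv : (ENNReal.ofReal ((2 * (n : ℝ)) / ((n : ℝ) - 2))) / (2 : ENNReal)
      = ENNReal.ofReal ((n : ℝ) / ((n : ℝ) - 2)) := by
    rw [show (2 : ENNReal) = ENNReal.ofReal (2 : ℝ) by simp,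
      ← ENNReal.ofReal_div_of_pos (by norm_num)]
    congr 1
    field_simp
  have hmemu2 : MemLp (fun x => (u x) ^ 2) (ENNReal.ofReal ((n : ℝ) / ((n : ℝ) - 2))) μ := by
    have h1 := (memLp_norm_rpow_iff (p := ENNReal.ofReal ((2 * (n : ℝ)) / ((n : ℝ) - 2)))
      (q := (2 : ENNReal)) hu.aestronglyMeasurable (by norm_num) (by norm_num)).mpr hmemu
    rw [hdiv] at h1
    have heq : ∀ x, ‖u x‖ ^ ((2 : ENNReal)).toReal = (u x) ^ 2 := fun x => by
      norm_num [Real.norm_eq_abs, Real.rpow_two, sq_abs]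
    simpa [heq] using h1
  have hconj : ((n : ℝ) / ((n : ℝ) - 2)).HolderConjugate ((n : ℝ) / 2) := by
    rw [Real.holderConjugate_iff]
    constructor
    · rw [lt_div_iff₀ hn2pos]; linarith
    · field_simp; ring
  have hone : MemLp (fun _ : M => (1 : ℝ)) (ENNReal.ofReal ((n : ℝ) / 2)) μ :=
    memLp_const 1
  have hholder := integral_mul_le_Lp_mul_Lq_of_nonneg hconj
    (f := fun x => (u x) ^ 2) (g := fun _ => (1 : ℝ))
    (Filter.Eventually.of_forall fun x => by simpa using sq_nonneg (u x))
    (Filter.Eventually.of_forall fun _ => by simp) hmemu2 hone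
  have hpow_eq : ∀ x, ((u x) ^ 2) ^ ((n : ℝ) / ((n : ℝ) - 2))
      = |u x| ^ ((2 * (n : ℝ)) / ((n : ℝ) - 2)) := by
    intro x
    rw [← sq_abs, ← Real.rpow_two, ← Real.rpow_mul (abs_nonneg _)]
    congr 1
    ring
  have hinv1 : 1 / ((n : ℝ) / ((n : ℝ) - 2)) = e := by
    rw [he]; field_simp
  have hinv2 : 1 / ((n : ℝ) / 2) = (2 : ℝ) / n := by
    field_simp
  have hholder2 : I2 ≤ Ip ^ e * V ^ ((2 : ℝ) / n) := by
    have h1 : ∫ x, (u x) ^ 2 * 1 ∂μ = I2 := by simp [hI2]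
    have h2 : ∫ x, ((u x) ^ 2) ^ ((n : ℝ) / ((n : ℝ) - 2)) ∂μ = Ip := by
      rw [hIp]; exact integral_congr_ae (Filter.Eventually.of_forall fun x => hpow_eq x)
    have h3 : ∫ x, (1 : ℝ) ^ ((n : ℝ) / 2) ∂μ = V := by
      simp [hVdef, measureReal_def]
    rw [h1, h2, h3, hinv1, hinv2] at hholder
    exact hholder
  -- conclude
  have hIpe_pos : 0 < Ip ^ e := by
    by_contra h
    push_neg at h
    have : Ip ^ e = 0 := le_antisymm h hIpe_nonneg
    rw [this, zero_mul] at hholder2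
    linarith
  have key : lam * V ^ ((2 : ℝ) / n) * Ip ^ e ≤ Y * Ip ^ e := by
    calc lam * V ^ ((2 : ℝ) / n) * Ip ^ e = lam * (Ip ^ e * V ^ ((2 : ℝ) / n)) := by ring
      _ ≤ lam * I2 := mul_le_mul_of_nonpos_left hholder2 hlam
      _ ≤ Y * Ip ^ e := hstep1
  exact le_of_mul_le_mul_right key hIpe_pos
end

section
/- Let n ≥ 3 be an integer and let (M, μ) be a measure space with finite total measure V = μ(M), V > 0. Let u, s, w : M → ℝ be measurable functions such that u², s·u², w, and |u|^(2n/(n-2)) are integrable with respect to μ, with w ≥ 0 almost everywhere and ∫_M u² dμ > 0. Let Y and λ be real numbers with Y < 0, and suppose that (i) ∫_M ( s·u² + 4·((n-1)/(n-2))·w ) dμ = Y · (∫_M |u|^(2n/(n-2)) dμ)^((n-2)/n), and (ii) λ · ∫_M u² dμ ≤ ∫_M ( s·u² + 4·w ) dμ. If moreover λ · V^(2/n) = Y, then w = 0 almost everywhere and |u| is almost everywhere equal to a constant. -/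
open MeasureTheory

/-- Equality analysis in the proof of Proposition 2 of the paper, abstracted to a
measure space: if `Y < 0` and `λ · V^(2/n) = Y` in the chain of inequalities, then
`w = 0` a.e. and `|u|` is a.e. equal to a constant. -/
theorem stmt_4 {M : Type*} [MeasurableSpace M] (μ : Measure M) [IsFiniteMeasure μ]
    (n : ℕ) (hn : 3 ≤ n) (hV : 0 < (μ Set.univ).toReal)
    (u s w : M → ℝ) (hu : Measurable u) (hs : Measurable s) (hw : Measurable w)
    (hu2 : Integrable (fun x => (u x) ^ 2) μ)
    (hsu2 : Integrable (fun x => s x * (u x) ^ 2) μ)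
    (hwint : Integrable w μ)
    (hint : Integrable (fun x => |u x| ^ ((2 * (n : ℝ)) / ((n : ℝ) - 2))) μ)
    (hw0 : ∀ᵐ x ∂μ, 0 ≤ w x)
    (hu2pos : 0 < ∫ x, (u x) ^ 2 ∂μ)
    (Y lam : ℝ) (hY : Y < 0)
    (hi : ∫ x, (s x * (u x) ^ 2 + 4 * (((n : ℝ) - 1) / ((n : ℝ) - 2)) * w x) ∂μ =
      Y * (∫ x, |u x| ^ ((2 * (n : ℝ)) / ((n : ℝ) - 2)) ∂μ) ^ (((n : ℝ) - 2) / n))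
    (hii : lam * ∫ x, (u x) ^ 2 ∂μ ≤ ∫ x, (s x * (u x) ^ 2 + 4 * w x) ∂μ)
    (heq : lam * (μ Set.univ).toReal ^ ((2 : ℝ) / n) = Y) :
    (∀ᵐ x ∂μ, w x = 0) ∧ ∃ c : ℝ, ∀ᵐ x ∂μ, |u x| = c := by
  have hn3 : (3 : ℝ) ≤ (n : ℝ) := by exact_mod_cast hn
  have hn2 : (0 : ℝ) < (n : ℝ) - 2 := by linarith
  have hnpos : (0 : ℝ) < (n : ℝ) := by linarith
  have hμne : μ ≠ 0 := by
    intro h; rw [h] at hV; simp at hV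
  haveI : NeZero μ := ⟨hμne⟩
  set V : ℝ := (μ Set.univ).toReal with hVdef
  set q : ℝ := (n : ℝ) / ((n : ℝ) - 2) with hqdef
  set r : ℝ := ((n : ℝ) - 2) / (n : ℝ) with hrdef
  have hq1 : 1 < q := by
    rw [hqdef, lt_div_iff₀ hn2]; linarith
  have hr0 : 0 < r := div_pos hn2 hnpos
  have hqr : q * r = 1 := by
    rw [hqdef, hrdef]; field_simp
  have h2n : (2 : ℝ) / n = 1 - r := by
    rw [hrdef]; field_simp; ring
  -- pointwise identity
  have hpt : ∀ x, ((u x) ^ 2) ^ q = |u x| ^ ((2 * (n : ℝ)) / ((n : ℝ) - 2)) := by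
    intro x
    have h1 : (u x) ^ 2 = |u x| ^ ((2 : ℕ) : ℝ) := by
      rw [Real.rpow_natCast, sq_abs]
    rw [h1, ← Real.rpow_mul (abs_nonneg _)]
    norm_num
    rw [hqdef, mul_div_assoc]
  set I2 : ℝ := ∫ x, (u x) ^ 2 ∂μ with hI2def
  set Ip : ℝ := ∫ x, |u x| ^ ((2 * (n : ℝ)) / ((n : ℝ) - 2)) ∂μ with hIpdef
  have hIp0 : 0 ≤ Ip := by
    rw [hIpdef]
    exact integral_nonneg fun x => Real.rpow_nonneg (abs_nonneg _) _
  have hVpow : 0 < V ^ ((2 : ℝ) / n) := Real.rpow_pos_of_pos hV _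
  have hlam : lam < 0 := by
    by_contra h
    push_neg at h
    nlinarith [mul_nonneg h hVpow.le]
  -- integrals of the linear combinations
  set A : ℝ := ∫ x, s x * (u x) ^ 2 ∂μ with hAdef
  set W : ℝ := ∫ x, w x ∂μ with hWdef
  have hW0 : 0 ≤ W := integral_nonneg_of_ae hw0
  set C : ℝ := 4 * (((n : ℝ) - 1) / ((n : ℝ) - 2)) with hCdef
  have hC4 : 4 < C := by
    have h1 : (1 : ℝ) < ((n : ℝ) - 1) / ((n : ℝ) - 2) := by
      rw [lt_div_iff₀ hn2]; linarith
    rw [hCdef]; linarith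
  have hiA : A + C * W = Y * Ip ^ r := by
    have h4 := integral_add hsu2 ((hwint.const_mul C))
    simp only [integral_const_mul] at h4
    rw [hAdef, hWdef, ← h4]
    exact hi
  have hiiA : lam * I2 ≤ A + 4 * W := by
    have h4 := integral_add hsu2 ((hwint.const_mul 4))
    simp only [integral_const_mul] at h4
    rw [hAdef, hWdef, ← h4]
    exact hii
  -- Jensen dichotomy
  have hfs : ∀ᵐ x ∂μ, (u x) ^ 2 ∈ Set.Ici (0 : ℝ) := ae_of_all _ fun x => Set.mem_Ici.mpr (sq_nonneg _)
  have hgi : Integrable ((fun y : ℝ => y ^ q) ∘ fun x => (u x) ^ 2) μ := by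
    have hfun : ((fun y : ℝ => y ^ q) ∘ fun x => (u x) ^ 2)
        = fun x => |u x| ^ ((2 * (n : ℝ)) / ((n : ℝ) - 2)) := funext fun x => hpt x
    rw [hfun]; exact hint
  have hdich := (strictConvexOn_rpow hq1).ae_eq_const_or_map_average_lt
    (Real.continuous_rpow_const (by positivity)).continuousOn isClosed_Ici hfs hu2 hgi
  have havg : ⨍ x, (u x) ^ 2 ∂μ = I2 / V := by
    rw [average_eq, smul_eq_mul, ← hI2def, measureReal_def, ← hVdef, inv_mul_eq_div]
  have havgg : ⨍ x, ((fun y : ℝ => y ^ q) ((u x) ^ 2)) ∂μ = Ip / V := by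
    rw [average_eq, smul_eq_mul]
    simp only [hpt]
    rw [← hIpdef, measureReal_def, ← hVdef, inv_mul_eq_div]
  have hVr : 0 < V ^ r := Real.rpow_pos_of_pos hV _
  have hV1r : 0 < V ^ (1 - r) := Real.rpow_pos_of_pos hV _
  have h5 : V ^ (1 - r) * V ^ r = V := by
    rw [← Real.rpow_add hV, ← Real.rpow_one V]; norm_num
  clear_value V q r I2 Ip A W C
  -- key: from Jensen inequality get comparison of I2 with V^(1-r) * Ip^r
  have key : ∀ {I2' : ℝ}, 0 ≤ I2' → (I2' / V) ^ q ≤ Ip / V → I2' ≤ V ^ (1 - r) * Ip ^ r := by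
    intro I2' hI2'0 h
    have h2 : ((I2' / V) ^ q) ^ r ≤ (Ip / V) ^ r :=
      Real.rpow_le_rpow (Real.rpow_nonneg (by positivity) _) h hr0.le
    rw [← Real.rpow_mul (by positivity : (0:ℝ) ≤ I2' / V), hqr, Real.rpow_one,
      Real.div_rpow hIp0 hV.le] at h2
    have h4 : I2' * V ^ r ≤ Ip ^ r * V := by
      rw [div_le_div_iff₀ hV hVr] at h2; linarith
    calc I2' = I2' * V ^ r / V ^ r := by field_simp
      _ ≤ Ip ^ r * V / V ^ r := by gcongr
      _ = Ip ^ r * (V / V ^ r) := by ring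
      _ = V ^ (1 - r) * Ip ^ r := by rw [Real.rpow_sub hV, Real.rpow_one]; ring
  rcases hdich with hconst | hstrict
  · -- u^2 a.e. constant
    rw [havg] at hconst
    have hc0 : 0 < I2 / V := div_pos hu2pos hV
    -- compute Ip
    have hIpval : Ip = V * (I2 / V) ^ q := by
      have hae : ∀ᵐ x ∂μ, |u x| ^ ((2 * (n : ℝ)) / ((n : ℝ) - 2)) = (I2 / V) ^ q := by
        filter_upwards [hconst] with x hx
        simp only [Function.const_apply] at hx
        rw [← hpt x, hx]
      rw [hIpdef, integral_congr_ae hae, integral_const, smul_eq_mul, measureReal_def, ← hVdef]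
    have hIpr : V ^ (1 - r) * Ip ^ r = I2 := by
      rw [hIpval, Real.mul_rpow hV.le (Real.rpow_nonneg hc0.le _),
        ← Real.rpow_mul hc0.le, hqr, Real.rpow_one]
      rw [show V ^ (1 - r) * (V ^ r * (I2 / V)) = V ^ (1 - r) * V ^ r * (I2 / V) by ring, h5]
      field_simp
    -- equality chain forces W = 0
    have hYI : Y * Ip ^ r = lam * I2 := by
      rw [← heq, h2n, ← hIpr]; ring
    have h6 : C * W ≤ 4 * W := by linarith [hiA, hiiA, hYI]
    have h7 : W ≤ 0 := by
      by_contra hpos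
      push_neg at hpos
      have h8 : 4 * W < C * W := mul_lt_mul_of_pos_right hC4 hpos
      linarith
    have hWzero : W = 0 := le_antisymm h7 hW0
    constructor
    · rw [hWdef] at hWzero
      exact (integral_eq_zero_iff_of_nonneg_ae hw0 hwint).1 hWzero
    · refine ⟨Real.sqrt (I2 / V), ?_⟩
      filter_upwards [hconst] with x hx
      simp only [Function.const_apply] at hx
      rw [← Real.sqrt_sq_eq_abs, hx]
  · -- strict Jensen: contradiction
    exfalso
    rw [havg, havgg] at hstrict
    have hle : I2 ≤ V ^ (1 - r) * Ip ^ r := key (le_of_lt hu2pos) hstrict.le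
    have hne : I2 ≠ V ^ (1 - r) * Ip ^ r := by
      intro habs
      have hIppos : 0 < Ip := by
        by_contra hIpz
        push_neg at hIpz
        have hIpe : Ip = 0 := le_antisymm hIpz hIp0
        rw [hIpe, Real.zero_rpow (ne_of_gt hr0), mul_zero] at habs
        linarith
      have hval : (I2 / V) ^ q = Ip / V := by
        rw [habs]
        rw [show V ^ (1 - r) * Ip ^ r / V = Ip ^ r / V ^ r by
          rw [Real.rpow_sub hV, Real.rpow_one]; field_simp]
        rw [← Real.div_rpow hIp0 hV.le, ← Real.rpow_mul (by positivity : (0:ℝ) ≤ Ip / V),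
          mul_comm r q, hqr, Real.rpow_one]
      rw [hval] at hstrict
      exact lt_irrefl _ hstrict
    have hstrict2 : I2 < V ^ (1 - r) * Ip ^ r := lt_of_le_of_ne hle hne
    have hYI : Y * Ip ^ r = lam * (V ^ (1 - r) * Ip ^ r) := by
      rw [← heq, h2n]; ring
    have hfin : lam * (V ^ (1 - r) * Ip ^ r) < lam * I2 :=
      mul_lt_mul_of_neg_left hstrict2 hlam
    have h6 : 4 * W ≤ C * W := mul_le_mul_of_nonneg_right hC4.le hW0
    linarith [hiA, hiiA, hYI, hfin, h6]
end
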